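/- Inversion in ISC: Fix κ ∈ K. If the sequent κ(A₁¹,…,A_{c(κ)}¹;B₁¹,…,B_{v(κ)}¹),…,κ(A₁ᵏ,…,A_{c(κ)}ᵏ;B₁ᵏ,…,B_{v(κ)}ᵏ) ⊢ κ(A₁,…,A_{c(κ)};B₁,…,B_{v(κ)}) is derivable in ISC, then there exists a subset {i₁,…,i_p} ⊆ {1,…,k} such that Aⱼ ⊢ Aⱼ^{i_q} is derivable for all 1 ≤ j ≤ c(κ) and 1 ≤ q ≤ p, and Bⱼ^{i₁},…,Bⱼ^{i_p} ⊢ Bⱼ is derivable for all 1 ≤ j ≤ v(κ). -/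

import Mathlib

/-- Types built from intersection and a set `K` of type constructors, each
`κ : K` having contravariant arity `c κ` and covariant arity `v κ`. -/
inductive GTy (K : Type) (c v : K → ℕ) : Type
  | inter : GTy K c v → GTy K c v → GTy K c v
  | cons : (κ : K) → (Fin (c κ) → GTy K c v) → (Fin (v κ) → GTy K c v) → GTy K c v

/-- The sequent-style subtyping system ISC, parameterized by the width
function `w` (valued in {0,1}). Sequents `Γ ⊢ A` with `Γ` a list of types. -/
inductive ISC {K : Type} {c v : K → ℕ} (w : K → ℕ) : List (GTy K c v) → GTy K c v → Prop
  | wk {Γ Δ : List (GTy K c v)} {C : GTy K c v} (κ : K)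
      (f : Fin (c κ) → GTy K c v) (g : Fin (v κ) → GTy K c v) :
      ISC w (Γ ++ Δ) C → ISC w (Γ ++ GTy.cons κ f g :: Δ) C
  | interR {Γ : List (GTy K c v)} {A B : GTy K c v} :
      ISC w Γ A → ISC w Γ B → ISC w Γ (GTy.inter A B)
  | interL {Γ Δ : List (GTy K c v)} {A B C : GTy K c v} :
      ISC w (Γ ++ A :: B :: Δ) C → ISC w (Γ ++ GTy.inter A B :: Δ) C
  | constr (κ : K) (k : ℕ) (hk : w κ ≤ k)
      (As : Fin (c κ) → Fin k → GTy K c v) (Bs : Fin (v κ) → Fin k → GTy K c v)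
      (A : Fin (c κ) → GTy K c v) (B : Fin (v κ) → GTy K c v) :
      (∀ j i, ISC w [A j] (As j i)) →
      (∀ j, ISC w (List.ofFn (Bs j)) (B j)) →
      ISC w (List.ofFn fun i => GTy.cons κ (fun j => As j i) (fun j => Bs j i))
        (GTy.cons κ A B)


theorem GTy.cons_inj {K : Type} {c v : K → ℕ} {κ : K} {f f' : Fin (c κ) → GTy K c v}
    {g g' : Fin (v κ) → GTy K c v} (h : GTy.cons κ f g = GTy.cons κ f' g') :
    f = f' ∧ g = g' := by
  injection h with h0 h1 h2
  exact ⟨h1, h2⟩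

theorem List.map_eq_ofFn_get {α β : Type*} (L : List α) (F : α → β) :
    L.map F = List.ofFn (fun i : Fin L.length => F (L.get i)) := by
  conv_lhs => rw [← (List.ofFn_getElem : _ = L)]
  rw [List.map_ofFn]
  rfl

theorem ISC.inversion_aux {K : Type} {c v : K → ℕ} {w : K → ℕ}
    {κ : K} {k : ℕ}
    {As : Fin (c κ) → Fin k → GTy K c v} {Bs : Fin (v κ) → Fin k → GTy K c v}
    {A : Fin (c κ) → GTy K c v} {B : Fin (v κ) → GTy K c v}
    {Γ : List (GTy K c v)} {C : GTy K c v} (h : ISC w Γ C) :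
    ∀ L : List (Fin k),
      Γ = L.map (fun i => GTy.cons κ (fun j => As j i) (fun j => Bs j i)) →
      C = GTy.cons κ A B →
      ∃ is : List (Fin k), is.Sublist L ∧
        (∀ j, ∀ i ∈ is, ISC w [A j] (As j i)) ∧
        (∀ j, ISC w (is.map fun i => Bs j i) (B j)) := by
  induction h with
  | wk κ' f g h ih =>
    rename_i Γ' Δ' C'
    intro L hΓ hC
    obtain ⟨L₁, L₂', hL, h1, h2⟩ := List.map_eq_append_iff.mp hΓ.symm
    obtain ⟨i, L₂, hL2, hfi, h3⟩ := List.map_eq_cons_iff.mp h2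
    obtain ⟨is, hsub, hA, hB⟩ := ih (L₁ ++ L₂) (by rw [List.map_append, h1, h3]) hC
    refine ⟨is, hsub.trans ?_, hA, hB⟩
    rw [hL, hL2]
    exact (List.sublist_cons_self i L₂).append_left L₁
  | interR h1 h2 ih1 ih2 =>
    intro L hΓ hC
    exact absurd hC (by simp)
  | interL h ih =>
    rename_i Γ' Δ' A' B' C'
    intro L hΓ hC
    have hmem : GTy.inter A' B' ∈ L.map
        (fun i => GTy.cons κ (fun j => As j i) (fun j => Bs j i)) := by
      rw [← hΓ]; simp
    obtain ⟨i, _, hi⟩ := List.mem_map.mp hmem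
    exact absurd hi (by simp)
  | constr κ' k' hk' As' Bs' A' B' hA' hB' ihA ihB =>
    intro L hΓ hC
    injection hC with hκ hA heB
    subst κ'
    have hAeq : A' = A := eq_of_heq hA
    have hBeq : B' = B := eq_of_heq heB
    subst hAeq; subst hBeq
    have hlen : k' = L.length := by
      have := congrArg List.length hΓ
      simpa using this
    subst hlen
    rw [List.map_eq_ofFn_get] at hΓ
    have hpt := List.ofFn_inj.mp hΓ
    refine ⟨L, List.Sublist.refl L, ?_, ?_⟩
    · intro j i hi
      obtain ⟨q, hq⟩ := List.get_of_mem hi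
      have h1 := congrFun (GTy.cons_inj (congrFun hpt q)).1 j
      rw [← hq, ← h1]
      exact hA' j q
    · intro j
      have heq : (L.map fun i => Bs j i) = List.ofFn (Bs' j) := by
        rw [List.map_eq_ofFn_get]
        congr 1
        funext q
        exact (congrFun (GTy.cons_inj (congrFun hpt q)).2 j).symm
      rw [heq]
      exact hB' j
/-- Inversion in ISC: if `κ(A₁¹,…;B₁¹,…), …, κ(A₁ᵏ,…;B₁ᵏ,…) ⊢ κ(A₁,…;B₁,…)`
is derivable, then there is a subset `{i₁,…,i_p} ⊆ {1,…,k}` such that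
`Aⱼ ⊢ Aⱼ^{i_q}` for all `j, q` and `Bⱼ^{i₁},…,Bⱼ^{i_p} ⊢ Bⱼ` for all `j`. -/
theorem ISC.inversion {K : Type} {c v : K → ℕ} (w : K → ℕ) (hw : ∀ κ, w κ ≤ 1)
    (κ : K) (k : ℕ)
    (As : Fin (c κ) → Fin k → GTy K c v) (Bs : Fin (v κ) → Fin k → GTy K c v)
    (A : Fin (c κ) → GTy K c v) (B : Fin (v κ) → GTy K c v)
    (h : ISC w (List.ofFn fun i => GTy.cons κ (fun j => As j i) (fun j => Bs j i))
          (GTy.cons κ A B)) :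
    ∃ is : List (Fin k), is.Sublist (List.finRange k) ∧
      (∀ j, ∀ i ∈ is, ISC w [A j] (As j i)) ∧
      (∀ j, ISC w (is.map fun i => Bs j i) (B j)) := h.inversion_aux (List.finRange k) (by rw [List.ofFn_eq_map]) rfl
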